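/- Let G be a temporal directed graph, S ⊆ V a set of source vertices, and [tα,tω] a time interval; for v ∈ V let ea(v) denote the earliest arrival time from S to v within [tα,tω], with ea(s) = tα for s ∈ S and ea(v) = ∞ if v is unreachable. Let A ⊆ V with S ⊆ A, and suppose some vertex outside A is reachable, so that m := min_{v∉A} ea(v) < ∞. For v ∉ A define the tentative arrival tent(v) := min{ t+1 : there exists u ∈ A with (u,v) ∈ E_t, ea(u) ≤ t, and t+1 ≤ tω } (min over the empty set is ∞). Then min_{v∉A} tent(v) = m, and every vertex v ∉ A attaining this minimum satisfies tent(v) = ea(v) = m. (This is the greedy invariant establishing the correctness claim of Theorem 2: the Dijkstra-based extraction of the unsettled vertex with minimum tentative arrival time correctly settles its earliest arrival time.) -/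

import Mathlib

/-- A temporal `(s,d)`-path within the time interval `[tα, tω]` in a temporal directed
graph on vertex type `V` with time-indexed edge relation `E`: a sequence of pairwise
distinct vertices `v 0 = s, …, v k = d` together with strictly increasing departure
times `t 1 < ⋯ < t k` (here `t i` is the time of the edge from `v i` to `v (i+1)`),
each edge present at its departure time, all departure times `≥ tα`, and arrival
`t k + 1 ≤ tω`.  The empty path (`k = 0`) requires `s = d`. -/
structure TPath (V : Type*) (E : ℕ → V → V → Prop) (s d : V) (tα tω : ℕ) where
  k : ℕ
  v : Fin (k + 1) → V
  t : Fin k → ℕ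
  hv0 : v 0 = s
  hvk : v (Fin.last k) = d
  inj : Function.Injective v
  mono : StrictMono t
  hedge : ∀ i : Fin k, E (t i) (v i.castSucc) (v i.succ)
  hstart : ∀ i : Fin k, tα ≤ t i
  hend : ∀ i : Fin k, t i + 1 ≤ tω

namespace TPath

variable {V : Type*} {E : ℕ → V → V → Prop} {s d : V} {tα tω : ℕ}

/-- Ending (arrival) time of a temporal path: `t k + 1`; the empty path arrives at `tα`. -/
def endTime (π : TPath V E s d tα tω) : ℕ :=
  if h : 0 < π.k then π.t ⟨π.k - 1, by omega⟩ + 1 else tα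

/-- `x` is the index of the first point of contact of the path `π` with the decoy set `C`:
`π.v x ∈ C`, and `x` is the least such index. -/
def hitsAt (π : TPath V E s d tα tω) (C : Set V) (x : Fin (π.k + 1)) : Prop :=
  π.v x ∈ C ∧ ∀ j : Fin (π.k + 1), π.v j ∈ C → x ≤ j

/-- Index of the first vertex of `π` lying in `C` (`sInf ∅ = 0` if there is none). -/
noncomputable def firstContact (π : TPath V E s d tα tω) (C : Set V) : ℕ :=
  sInf {i : ℕ | ∃ h : i < π.k + 1, π.v ⟨i, h⟩ ∈ C}

/-- Response time `RT(π, C) = t k − t x` where `v x` is the first point of contact of `π`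
with `C` (entered via the edge with time `t x`); junk value `0` if `π` does not meet `C`
properly. -/
noncomputable def RT (π : TPath V E s d tα tω) (C : Set V) : ℕ :=
  if h : 0 < π.firstContact C ∧ π.firstContact C ≤ π.k ∧ 0 < π.k then
    π.t ⟨π.k - 1, by omega⟩ - π.t ⟨π.firstContact C - 1, by omega⟩
  else 0

end TPath

/-- Earliest arrival time from the source set `S` to `x` within `[tα, tω]`
(`⊤ = ∞` if unreachable; it is `tα` for `x ∈ S`, realized by the empty path). -/
noncomputable def ea {V : Type*} (E : ℕ → V → V → Prop) (S : Set V) (tα tω : ℕ)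
    (x : V) : ℕ∞ :=
  sInf {n : ℕ∞ | ∃ s ∈ S, ∃ π : TPath V E s x tα tω, n = (π.endTime : ℕ∞)}

/-- `C` is a temporal `(S,d)`-cut within `[tα, tω]`: every temporal `(s,d)`-path within
`[tα, tω]` with `s ∈ S` contains a vertex of `C`. -/
def IsTemporalCut {V : Type*} (E : ℕ → V → V → Prop) (S : Set V) (d : V) (tα tω : ℕ)
    (C : Set V) : Prop :=
  ∀ s ∈ S, ∀ π : TPath V E s d tα tω, ∃ i, π.v i ∈ C

/-- Tentative arrival time of `x ∉ A`: the least `t + 1` over edges `(u, x)` at time `t`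
with `u ∈ A`, `ea u ≤ t` and `t + 1 ≤ tω` (`⊤` if no such edge exists). -/
noncomputable def tent {V : Type*} (E : ℕ → V → V → Prop) (S A : Set V) (tα tω : ℕ)
    (x : V) : ℕ∞ :=
  sInf {n : ℕ∞ | ∃ u ∈ A, ∃ t : ℕ,
    E t u x ∧ ea E S tα tω u ≤ (t : ℕ∞) ∧ t + 1 ≤ tω ∧ n = (t : ℕ∞) + 1}

/-- sInf of a set of `ℕ∞` is attained if it is `< ⊤`. -/
lemma enat_sInf_mem {T : Set ℕ∞} (h : sInf T < ⊤) : sInf T ∈ T := by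
  obtain ⟨a, haT, ha⟩ := sInf_lt_iff.mp h
  lift a to ℕ using ha.ne
  set N : Set ℕ := {k : ℕ | (k : ℕ∞) ∈ T} with hNdef
  have hne : N.Nonempty := ⟨a, haT⟩
  have hmem := Nat.sInf_mem hne
  have : sInf T = ((sInf N : ℕ) : ℕ∞) := by
    apply le_antisymm (sInf_le (show ((sInf N : ℕ) : ℕ∞) ∈ T from hmem))
    apply le_sInf
    intro b hb
    cases b with
    | top => exact le_top
    | coe b => exact_mod_cast Nat.sInf_le hb
  rw [this]; exact hmem

namespace TPath

variable {V : Type*} {E : ℕ → V → V → Prop} {s d : V} {tα tω : ℕ}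

lemma le_endTime' (π : TPath V E s d tα tω) : tα ≤ π.endTime := by
  unfold endTime
  split
  · next h => exact le_trans (π.hstart ⟨π.k - 1, by omega⟩) (Nat.le_succ _)
  · exact le_refl _

lemma t_add_one_le_endTime (π : TPath V E s d tα tω) (i : Fin π.k) :
    π.t i + 1 ≤ π.endTime := by
  have hk : 0 < π.k := i.pos
  unfold endTime
  rw [dif_pos hk]
  have hle : π.t i ≤ π.t ⟨π.k - 1, by omega⟩ := by
    apply π.mono.monotone
    rw [Fin.le_def]
    have := i.isLt
    simp only []
    omega
  omega

/-- The prefix of a temporal path up to index `j`. -/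
def prefixPath (π : TPath V E s d tα tω) (j : Fin (π.k + 1)) {x : V}
    (hj : π.v j = x) : TPath V E s x tα tω where
  k := j.val
  v i := π.v ⟨i.val, by have h1 := i.isLt; have h2 := j.isLt; omega⟩
  t i := π.t ⟨i.val, by have h1 := i.isLt; have h2 := j.isLt; omega⟩
  hv0 := by
    show π.v ⟨((0 : Fin (j.val + 1)) : ℕ), _⟩ = s
    have h0 : (⟨((0 : Fin (j.val + 1)) : ℕ), by have := j.isLt; omega⟩ :
        Fin (π.k + 1)) = 0 := by
      ext; simp
    rw [h0, π.hv0]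
  hvk := by
    show π.v ⟨((Fin.last j.val) : ℕ), _⟩ = x
    have h0 : (⟨((Fin.last j.val) : ℕ), by have := j.isLt; omega⟩ :
        Fin (π.k + 1)) = j := by
      ext; simp
    rw [h0, hj]
  inj := by
    intro a b hab
    have h := π.inj hab
    rw [Fin.mk.injEq] at h
    exact Fin.ext h
  mono := fun a b hab => π.mono hab
  hedge i := π.hedge ⟨i.val, by have h1 := i.isLt; have h2 := j.isLt; omega⟩
  hstart i := π.hstart _
  hend i := π.hend _

lemma endTime_prefixPath_le (π : TPath V E s d tα tω) (j : Fin (π.k + 1)) {x : V}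
    (hj : π.v j = x) : (π.prefixPath j hj).endTime ≤ π.endTime := by
  show (if h : 0 < j.val then _ + 1 else tα) ≤ π.endTime
  split
  · next h =>
    exact π.t_add_one_le_endTime ⟨j.val - 1, by have := j.isLt; omega⟩
  · exact π.le_endTime'

lemma endTime_prefixPath_le_t (π : TPath V E s d tα tω) (i : Fin π.k) {x : V}
    (hj : π.v i.castSucc = x) : (π.prefixPath i.castSucc hj).endTime ≤ π.t i := by
  show (if h : 0 < (i.castSucc).val then _ + 1 else tα) ≤ π.t i
  split
  · next h =>
    show π.t ⟨(i.castSucc).val - 1, by have := i.isLt; omega⟩ + 1 ≤ π.t i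
    have hlt : (⟨(i.castSucc).val - 1, by have := i.isLt; omega⟩ : Fin π.k) < i := by
      rw [Fin.lt_def]
      simp only [Fin.coe_castSucc] at h ⊢
      omega
    have := π.mono hlt
    omega
  · exact π.hstart i

/-- Extension of a temporal path by one edge `(d, x)` at time `t'`. -/
def extend (π : TPath V E s d tα tω) (x : V) (t' : ℕ) (hx : ∀ i, π.v i ≠ x)
    (hE : E t' d x) (hle : π.endTime ≤ t') (hω : t' + 1 ≤ tω) :
    TPath V E s x tα tω where
  k := π.k + 1
  v := Fin.snoc π.v x
  t := Fin.snoc π.t t'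
  hv0 := by
    rw [show (0 : Fin (π.k + 2)) = Fin.castSucc 0 from rfl, Fin.snoc_castSucc]
    exact π.hv0
  hvk := by rw [Fin.snoc_last]
  inj := by
    intro a b hab
    induction a using Fin.lastCases with
    | last =>
      induction b using Fin.lastCases with
      | last => rfl
      | cast b' =>
        rw [Fin.snoc_last, Fin.snoc_castSucc] at hab
        exact absurd hab.symm (hx b')
    | cast a' =>
      induction b using Fin.lastCases with
      | last =>
        rw [Fin.snoc_castSucc, Fin.snoc_last] at hab
        exact absurd hab (hx a')
      | cast b' =>
        rw [Fin.snoc_castSucc, Fin.snoc_castSucc] at hab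
        exact congrArg Fin.castSucc (π.inj hab)
  mono := by
    intro a b hab
    induction b using Fin.lastCases with
    | last =>
      obtain ⟨a', rfl⟩ := Fin.exists_castSucc_eq.mpr (Fin.ne_last_of_lt hab)
      rw [Fin.snoc_castSucc, Fin.snoc_last]
      have := π.t_add_one_le_endTime a'
      omega
    | cast b' =>
      obtain ⟨a', rfl⟩ := Fin.exists_castSucc_eq.mpr (Fin.ne_last_of_lt hab)
      rw [Fin.snoc_castSucc, Fin.snoc_castSucc]
      exact π.mono (Fin.castSucc_lt_castSucc_iff.mp hab)
  hedge := by
    intro i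
    induction i using Fin.lastCases with
    | last =>
      simp only [Fin.snoc_last, Fin.succ_last, Fin.snoc_castSucc, π.hvk]
      exact hE
    | cast i' =>
      simp only [Fin.snoc_castSucc, Fin.succ_castSucc]
      exact π.hedge i'
  hstart := by
    intro i
    induction i using Fin.lastCases with
    | last =>
      rw [Fin.snoc_last]
      exact le_trans π.le_endTime' hle
    | cast i' =>
      rw [Fin.snoc_castSucc]
      exact π.hstart i'
  hend := by
    intro i
    induction i using Fin.lastCases with
    | last => rw [Fin.snoc_last]; exact hω
    | cast i' => rw [Fin.snoc_castSucc]; exact π.hend i'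

lemma endTime_extend (π : TPath V E s d tα tω) (x : V) (t' : ℕ) (hx : ∀ i, π.v i ≠ x)
    (hE : E t' d x) (hle : π.endTime ≤ t') (hω : t' + 1 ≤ tω) :
    (π.extend x t' hx hE hle hω).endTime = t' + 1 := by
  have h : ∀ hlt : π.k + 1 - 1 < π.k + 1,
      Fin.snoc (α := fun _ => ℕ) π.t t' ⟨π.k + 1 - 1, hlt⟩ = t' := by
    intro hlt
    have h2 : (⟨π.k + 1 - 1, hlt⟩ : Fin (π.k + 1)) = Fin.last π.k := by ext; simp
    rw [h2, Fin.snoc_last]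
  have hk : 0 < (π.extend x t' hx hE hle hω).k := Nat.succ_pos π.k
  unfold endTime
  rw [dif_pos hk]
  congr 1
  exact h _

end TPath

lemma ea_le_of_path {V : Type*} {E : ℕ → V → V → Prop} {S : Set V} {tα tω : ℕ}
    {s x : V} (hs : s ∈ S) (π : TPath V E s x tα tω) :
    ea E S tα tω x ≤ (π.endTime : ℕ∞) :=
  sInf_le ⟨s, hs, π, rfl⟩

lemma ea_le_tent {V : Type*} (E : ℕ → V → V → Prop) (S A : Set V) (tα tω : ℕ)
    (x : V) : ea E S tα tω x ≤ tent E S A tα tω x := by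
  apply le_sInf
  rintro n ⟨u, huA, t, hE, hea, hω, rfl⟩
  have h1 : ea E S tα tω u < ⊤ :=
    lt_of_le_of_lt hea (by exact_mod_cast WithTop.coe_lt_top t)
  obtain ⟨s, hs, π, hπ⟩ := enat_sInf_mem h1
  have hπ' : ea E S tα tω u = (π.endTime : ℕ∞) := hπ
  have hend' : π.endTime ≤ t := by
    have h2 : (π.endTime : ℕ∞) ≤ (t : ℕ∞) := hπ' ▸ hea
    exact_mod_cast h2
  by_cases hx : ∃ i, π.v i = x
  · obtain ⟨i, hi⟩ := hx
    calc ea E S tα tω x ≤ ((π.prefixPath i hi).endTime : ℕ∞) := ea_le_of_path hs _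
      _ ≤ ((π.endTime : ℕ) : ℕ∞) := by exact_mod_cast π.endTime_prefixPath_le i hi
      _ ≤ (t : ℕ∞) + 1 := by
          have h3 : π.endTime ≤ t + 1 := by omega
          exact_mod_cast h3
  · push_neg at hx
    have h3 := ea_le_of_path hs (π.extend x t hx hE hend' hω)
    rw [π.endTime_extend x t hx hE hend' hω] at h3
    exact h3.trans_eq (by push_cast; ring)

/-- Boundary crossing: a path from inside `A` to outside `A` has a first edge
leaving `A`. -/
lemma exists_boundary {V : Type*} {E : ℕ → V → V → Prop} {A : Set V} {tα tω : ℕ}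
    {s d : V} (hs : s ∈ A) (hd : d ∉ A) (π : TPath V E s d tα tω) :
    ∃ i : Fin π.k, π.v i.castSucc ∈ A ∧ π.v i.succ ∉ A := by
  classical
  set N : Set ℕ := {n | ∃ h : n < π.k + 1, π.v ⟨n, h⟩ ∉ A} with hNdef
  have hne : N.Nonempty := ⟨π.k, Nat.lt_succ_self _, by
    rw [show (⟨π.k, Nat.lt_succ_self _⟩ : Fin (π.k + 1)) = Fin.last π.k from rfl,
      π.hvk]
    exact hd⟩
  obtain ⟨hj0lt, hj0⟩ := Nat.sInf_mem hne
  set j0 := sInf N with hj0def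
  have hj0pos : 0 < j0 := by
    rcases Nat.eq_zero_or_pos j0 with h | h
    · exfalso
      apply hj0
      have h1 : (⟨j0, hj0lt⟩ : Fin (π.k + 1)) = 0 := by ext; simp [h]
      rw [h1, π.hv0]
      exact hs
    · exact h
  have hj1 : j0 - 1 ∉ N := Nat.notMem_of_lt_sInf (by omega)
  refine ⟨⟨j0 - 1, by omega⟩, ?_, ?_⟩
  · by_contra hmem
    exact hj1 ⟨by omega, hmem⟩
  · have h2 : (Fin.succ (⟨j0 - 1, by omega⟩ : Fin π.k)) = ⟨j0, hj0lt⟩ := by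
      ext; simp; omega
    rw [h2]
    exact hj0

/-- greedy invariant of the Dijkstra-based earliest-arrival algorithm:
if some vertex outside the settled set `A ⊇ S` is reachable, i.e.
`m := ⨅ v ∉ A, ea v < ∞`, then `⨅ v ∉ A, tent v = m`, and every `v ∉ A` attaining the
minimum tentative arrival satisfies `tent v = ea v = m`. -/
theorem dijkstra_greedy_invariant {V : Type*} [Fintype V] (E : ℕ → V → V → Prop)
    (hloop : ∀ t u, ¬ E t u u) (S A : Set V) (tα tω : ℕ) (hSA : S ⊆ A)
    (hm : (⨅ v ∈ Aᶜ, ea E S tα tω v) < ⊤) :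
    (⨅ v ∈ Aᶜ, tent E S A tα tω v) = (⨅ v ∈ Aᶜ, ea E S tα tω v) ∧
    ∀ v ∉ A, tent E S A tα tω v = (⨅ w ∈ Aᶜ, tent E S A tα tω w) →
      tent E S A tα tω v = ea E S tα tω v ∧
      ea E S tα tω v = (⨅ w ∈ Aᶜ, ea E S tα tω w) := by
    classical
  set m : ℕ∞ := ⨅ v ∈ Aᶜ, ea E S tα tω v with hmdef
  have him : sInf (ea E S tα tω '' Aᶜ) = m := sInf_image
  have hmemm : sInf (ea E S tα tω '' Aᶜ) ∈ ea E S tα tω '' Aᶜ :=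
    enat_sInf_mem (him ▸ hm)
  rw [him] at hmemm
  obtain ⟨v0, hv0A, hv0⟩ := hmemm
  have hv0top : ea E S tα tω v0 < ⊤ := hv0.trans_lt hm
  obtain ⟨s, hs, π, hπ⟩ := enat_sInf_mem hv0top
  have hπ' : ea E S tα tω v0 = (π.endTime : ℕ∞) := hπ
  obtain ⟨i, huA, hwA⟩ := exists_boundary (hSA hs) hv0A π
  set u := π.v i.castSucc with hudef
  set w := π.v i.succ with hwdef
  have heau : ea E S tα tω u ≤ ((π.t i : ℕ) : ℕ∞) := by
    calc ea E S tα tω u ≤ ((π.prefixPath i.castSucc rfl).endTime : ℕ∞) :=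
          ea_le_of_path hs _
      _ ≤ ((π.t i : ℕ) : ℕ∞) := by exact_mod_cast π.endTime_prefixPath_le_t i rfl
  have htentw : tent E S A tα tω w ≤ ((π.t i : ℕ) : ℕ∞) + 1 :=
    sInf_le ⟨u, huA, π.t i, π.hedge i, heau, π.hend i, rfl⟩
  have hti : ((π.t i : ℕ) : ℕ∞) + 1 ≤ m := by
    rw [← hv0, hπ']
    have h4 := π.t_add_one_le_endTime i
    have h5 : ((π.t i + 1 : ℕ) : ℕ∞) ≤ ((π.endTime : ℕ) : ℕ∞) := by exact_mod_cast h4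
    exact le_trans (by push_cast; ring_nf; exact le_refl _) h5
  have hmw : m ≤ ea E S tα tω w := biInf_le (ea E S tα tω) (show w ∈ Aᶜ from hwA)
  have heaw_tent : ea E S tα tω w ≤ tent E S A tα tω w := ea_le_tent E S A tα tω w
  have htentw_m : tent E S A tα tω w = m :=
    le_antisymm (htentw.trans hti) (hmw.trans heaw_tent)
  have hm_le_tent : ∀ v ∈ Aᶜ, m ≤ tent E S A tα tω v := fun v hv =>
    (biInf_le (ea E S tα tω) hv).trans (ea_le_tent E S A tα tω v)
  have hpart1 : (⨅ v ∈ Aᶜ, tent E S A tα tω v) = m := by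
    apply le_antisymm
    · exact (biInf_le (tent E S A tα tω) (show w ∈ Aᶜ from hwA)).trans htentw_m.le
    · exact le_iInf₂ hm_le_tent
  refine ⟨hpart1, ?_⟩
  intro v hv htv
  rw [hpart1] at htv
  have h1 : ea E S tα tω v ≤ m := htv ▸ ea_le_tent E S A tα tω v
  have h2 : m ≤ ea E S tα tω v := biInf_le (ea E S tα tω) (show v ∈ Aᶜ from hv)
  have heq : ea E S tα tω v = m := le_antisymm h1 h2
  exact ⟨htv.trans heq.symm, heq⟩
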